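/- For every infinite sequence i : ℕ → Fin m and every point x₀ ∈ X, the sequence of iterated images n ↦ (w_{i(0)} ∘ w_{i(1)} ∘ ⋯ ∘ w_{i(n−1)})(x₀) converges in X, and the limit is independent of the choice of x₀: for any x₀, y₀ ∈ X the two corresponding sequences have the same limit. -/

import Mathlib

open Filter Set Metric Topology

/-- The `n`-fold composition `w_{i 0} ∘ w_{i 1} ∘ ⋯ ∘ w_{i (n-1)}` of maps of an iterated
function system along the first `n` letters of the sequence `i`. -/
def iterComp {X : Type*} {m : ℕ} (w : Fin m → X → X) (i : ℕ → Fin m) : ℕ → X → X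
  | 0 => id
  | n + 1 => w (i 0) ∘ iterComp w (fun k => i (k + 1)) n

lemma iterComp_lip {X : Type*} [MetricSpace X] {m : ℕ} {K : ℝ} (hK0 : 0 ≤ K)
    (w : Fin m → X → X)
    (hw : ∀ j : Fin m, ∀ x y : X, dist (w j x) (w j y) ≤ K * dist x y) :
    ∀ (n : ℕ) (i : ℕ → Fin m) (x y : X),
      dist (iterComp w i n x) (iterComp w i n y) ≤ K ^ n * dist x y := by
  intro n
  induction n with
  | zero => intro i x y; simp [iterComp]
  | succ n ih =>
    intro i x y
    calc dist (iterComp w i (n+1) x) (iterComp w i (n+1) y)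
        ≤ K * dist (iterComp w (fun k => i (k+1)) n x) (iterComp w (fun k => i (k+1)) n y) := by
          simpa [iterComp] using hw (i 0) _ _
      _ ≤ K * (K ^ n * dist x y) := by
          exact mul_le_mul_of_nonneg_left (ih _ x y) hK0
      _ = K ^ (n+1) * dist x y := by ring

lemma iterComp_succ_eq {X : Type*} {m : ℕ} (w : Fin m → X → X) :
    ∀ (n : ℕ) (i : ℕ → Fin m) (x : X),
      iterComp w i (n+1) x = iterComp w i n (w (i n) x) := by
  intro n
  induction n with
  | zero => intro i x; simp [iterComp]
  | succ n ih =>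
    intro i x
    show w (i 0) (iterComp w (fun k => i (k+1)) (n+1) x) = _
    rw [ih (fun k => i (k+1)) x]
    rfl

/-- For every sequence `i` and every `x₀`, the iterated images
`(w_{i 0} ∘ ⋯ ∘ w_{i (n-1)}) x₀` converge, with limit independent of `x₀`. -/
theorem ifs_iterated_images_converge
    {X : Type*} [MetricSpace X] [Nonempty X] [CompleteSpace X]
    {m : ℕ} (hm : 1 ≤ m) (K : ℝ) (hK0 : 0 ≤ K) (hK1 : K < 1)
    (w : Fin m → X → X)
    (hw : ∀ j : Fin m, ∀ x y : X, dist (w j x) (w j y) ≤ K * dist x y)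
    (i : ℕ → Fin m) :
    ∃ L : X, ∀ x₀ : X, Tendsto (fun n : ℕ => iterComp w i n x₀) atTop (𝓝 L) := by
  haveI : Nonempty (Fin m) := ⟨⟨0, hm⟩⟩
  obtain ⟨x₁⟩ := ‹Nonempty X›
  obtain ⟨C, hC⟩ : ∃ C : ℝ, ∀ j : Fin m, dist x₁ (w j x₁) ≤ C := by
    obtain ⟨j₀, hj₀⟩ := Finset.exists_max_image Finset.univ (fun j => dist x₁ (w j x₁))
      ⟨Classical.arbitrary (Fin m), Finset.mem_univ _⟩
    exact ⟨dist x₁ (w j₀ x₁), fun j => hj₀.2 j (Finset.mem_univ j)⟩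
  have hcauchy : CauchySeq (fun n : ℕ => iterComp w i n x₁) := by
    apply cauchySeq_of_le_geometric K C hK1
    intro n
    rw [iterComp_succ_eq]
    calc dist (iterComp w i n x₁) (iterComp w i n (w (i n) x₁))
        ≤ K ^ n * dist x₁ (w (i n) x₁) := iterComp_lip hK0 w hw n i _ _
      _ ≤ K ^ n * C := mul_le_mul_of_nonneg_left (hC _) (pow_nonneg hK0 n)
      _ = C * K ^ n := mul_comm _ _
  obtain ⟨L, hL⟩ := cauchySeq_tendsto_of_complete hcauchy
  refine ⟨L, fun x₀ => ?_⟩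
  rw [tendsto_iff_dist_tendsto_zero]
  have hsq : ∀ n : ℕ, dist (iterComp w i n x₀) L ≤
      K ^ n * dist x₀ x₁ + dist (iterComp w i n x₁) L := fun n =>
    (dist_triangle _ (iterComp w i n x₁) L).trans
      (add_le_add_left (iterComp_lip hK0 w hw n i x₀ x₁) _)
  have h1 : Tendsto (fun n : ℕ => K ^ n * dist x₀ x₁ + dist (iterComp w i n x₁) L)
      atTop (𝓝 0) := by
    have := (tendsto_pow_atTop_nhds_zero_of_lt_one hK0 hK1).mul_const (dist x₀ x₁)
    have h2 := (tendsto_iff_dist_tendsto_zero.mp hL)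
    simpa using this.add h2
  exact squeeze_zero (fun n => dist_nonneg) hsq h1
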